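/- For integers i₁ < i₂, the distribution spanned by Ê_(i₁) and Ê_(i₂) is involutive (i.e., [Ê_(i₁), Ê_(i₂)] lies pointwise in the span of Ê_(i₁), Ê_(i₂)) if and only if i₁ = 1 or i₂ = 1. -/

import Mathlib

open scoped BigOperators

/-- Partial derivative of a scalar function on `ℝ^m` in the `k`-th coordinate direction. -/
noncomputable def pderiv' {m : ℕ} (f : (Fin m → ℝ) → ℝ) (k : Fin m) (u : Fin m → ℝ) : ℝ :=
  fderiv ℝ f u (Pi.single k 1)

/-- Lie bracket of vector fields on `ℝ^m`: `[X,Y]^i = X^k ∂_k Y^i - Y^k ∂_k X^i`. -/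
noncomputable def lieB {m : ℕ} (X Y : (Fin m → ℝ) → (Fin m → ℝ)) (u : Fin m → ℝ) :
    Fin m → ℝ :=
  fun i => ∑ k, (X u k * pderiv' (fun v => Y v i) k u - Y u k * pderiv' (fun v => X v i) k u)

/-- The vector field `Ê_(l) = Σ_{i=1}^n (u^i)^l ∂_i - l (u^j)^(l-1) u^(n+1) ∂_(n+1)` on ℝ^(n+1). -/
noncomputable def Ehat (n : ℕ) (j : Fin n) (l : ℤ) (u : Fin (n+1) → ℝ) : Fin (n+1) → ℝ :=
  fun i => if h : (i : ℕ) < n then (u i) ^ l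
    else -(l : ℝ) * (u (Fin.castSucc j)) ^ (l - 1) * u (Fin.last n)

/-- The open set where `u^1, …, u^n` are pairwise distinct and nonzero and `u^(n+1) ≠ 0`. -/
def OmegaSet (n : ℕ) (u : Fin (n+1) → ℝ) : Prop :=
  (∀ a b : Fin n, a ≠ b → u (Fin.castSucc a) ≠ u (Fin.castSucc b)) ∧
  (∀ a : Fin n, u (Fin.castSucc a) ≠ 0) ∧ u (Fin.last n) ≠ 0

/-- for integers `i₁ < i₂`, the rank-2 distribution spanned by `Ê_(i₁), Ê_(i₂)`
is involutive (the bracket lies pointwise in the span) iff `i₁ = 1` or `i₂ = 1`. -/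
lemma hproj {N : ℕ} (i : Fin N) (u : Fin N → ℝ) :
    HasFDerivAt (fun v : Fin N → ℝ => v i)
      (ContinuousLinearMap.proj i : (Fin N → ℝ) →L[ℝ] ℝ) u :=
  (ContinuousLinearMap.proj i : (Fin N → ℝ) →L[ℝ] ℝ).hasFDerivAt

lemma pd_zpow {N : ℕ} (m : ℤ) (i k : Fin N) (u : Fin N → ℝ) (h : u i ≠ 0) :
    pderiv' (fun v => (v i)^m) k u = (m:ℝ) * (u i)^(m-1) * (if i = k then 1 else 0) := by
  have H : HasFDerivAt (fun v : Fin N → ℝ => (v i)^m)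
      (((m:ℝ) * (u i)^(m-1)) • (ContinuousLinearMap.proj i : (Fin N → ℝ) →L[ℝ] ℝ)) u :=
    by have := (hasDerivAt_zpow m (u i) (Or.inl h)).comp_hasFDerivAt u (hproj i u); exact this
  rw [pderiv', H.fderiv]
  simp [Pi.single_apply]

lemma pd_mul {n : ℕ} (m : ℤ) (j' : Fin (n+1)) (k : Fin (n+1)) (u : Fin (n+1) → ℝ)
    (h : u j' ≠ 0) :
    pderiv' (fun v => -(m:ℝ) * v j' ^ (m-1) * v (Fin.last n)) k u
      = -(m:ℝ) * ((((m:ℝ)-1) * (u j')^(m-2) * (if j' = k then 1 else 0)) * u (Fin.last n)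
          + (u j')^(m-1) * (if Fin.last n = k then 1 else 0)) := by
  have Hf : HasFDerivAt (fun v : Fin (n+1) → ℝ => (v j')^(m-1))
      ((((m-1:ℤ):ℝ) * (u j')^(m-1-1)) • (ContinuousLinearMap.proj j' : (Fin (n+1) → ℝ) →L[ℝ] ℝ)) u :=
    by have := (hasDerivAt_zpow (m-1) (u j') (Or.inl h)).comp_hasFDerivAt u (hproj j' u); exact this
  have Hp := Hf.mul (hproj (Fin.last n) u)
  have H : HasFDerivAt (fun v : Fin (n+1) → ℝ => -(m:ℝ) * (v j' ^ (m-1) * v (Fin.last n))) _ u :=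
    Hp.const_mul (-(m:ℝ))
  have He : (fun v : Fin (n+1) → ℝ => -(m:ℝ) * v j' ^ (m-1) * v (Fin.last n))
      = fun v => -(m:ℝ) * (v j' ^ (m-1) * v (Fin.last n)) := by
    funext v; ring
  rw [pderiv', He, H.fderiv]
  have : m - 1 - 1 = m - 2 := by ring
  simp only [Pi.single_apply, this, ContinuousLinearMap.add_apply, ContinuousLinearMap.smul_apply, ContinuousLinearMap.proj_apply, smul_eq_mul]
  split_ifs <;> push_cast <;> ring

lemma bracket_eq (n : ℕ) (j : Fin n) (l m : ℤ) (u : Fin (n+1) → ℝ)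
    (hu : ∀ a : Fin (n+1), (a:ℕ) < n → u a ≠ 0) :
    lieB (Ehat n j l) (Ehat n j m) u
      = fun i => ((m - l : ℤ) : ℝ) * Ehat n j (l+m-1) u i := by
  have hj : ((Fin.castSucc j : Fin (n+1)) : ℕ) < n := j.isLt
  have hju : u (Fin.castSucc j) ≠ 0 := hu _ hj
  funext i
  by_cases hi : (i:ℕ) < n
  · have hiu : u i ≠ 0 := hu i hi
    show (∑ k, (Ehat n j l u k * pderiv' (fun v => Ehat n j m v i) k u
        - Ehat n j m u k * pderiv' (fun v => Ehat n j l v i) k u)) = _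
    have e1 : (fun v : Fin (n+1) → ℝ => Ehat n j m v i) = fun v => (v i)^m := by
      funext v; simp [Ehat, hi]
    have e2 : (fun v : Fin (n+1) → ℝ => Ehat n j l v i) = fun v => (v i)^l := by
      funext v; simp [Ehat, hi]
    rw [e1, e2]
    rw [Finset.sum_eq_single i]
    · rw [pd_zpow m i i u hiu, pd_zpow l i i u hiu]
      simp only [if_pos rfl, Ehat, dif_pos hi, mul_one]
      have z1 : (u i)^l * (u i)^(m-1) = (u i)^(l+m-1) := by
        rw [← zpow_add₀ hiu]; ring_nf
      have z2 : (u i)^m * (u i)^(l-1) = (u i)^(l+m-1) := by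
        rw [← zpow_add₀ hiu]; ring_nf
      push_cast
      linear_combination ((m:ℝ)) * z1 - ((l:ℝ)) * z2
    · intro k _ hk
      rw [pd_zpow m i k u hiu, pd_zpow l i k u hiu, if_neg (Ne.symm hk)]
      ring
    · intro hmem; exact absurd (Finset.mem_univ i) hmem
  · have hil : i = Fin.last n := by
      have h2 := i.isLt
      have h3 : (i:ℕ) = n := by omega
      exact Fin.ext (by simp [h3])
    subst hil
    set j' : Fin (n+1) := Fin.castSucc j with hj'
    set w := u (Fin.last n) with hw
    set x := u j' with hx
    have hjl : j' ≠ Fin.last n := by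
      intro hcon
      rw [hcon] at hj
      simp at hj
    have e1 : (fun v : Fin (n+1) → ℝ => Ehat n j m v (Fin.last n))
        = fun v => -(m:ℝ) * v j' ^ (m-1) * v (Fin.last n) := by
      funext v; simp [Ehat, hi, hj']
    have e2 : (fun v : Fin (n+1) → ℝ => Ehat n j l v (Fin.last n))
        = fun v => -(l:ℝ) * v j' ^ (l-1) * v (Fin.last n) := by
      funext v; simp [Ehat, hi, hj']
    show (∑ k, (Ehat n j l u k * pderiv' (fun v => Ehat n j m v (Fin.last n)) k u
        - Ehat n j m u k * pderiv' (fun v => Ehat n j l v (Fin.last n)) k u)) = _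
    rw [e1, e2]
    set A : ℝ := x^l * (-(m:ℝ) * ((((m:ℝ)-1) * x^(m-2)) * w))
        - x^m * (-(l:ℝ) * ((((l:ℝ)-1) * x^(l-2)) * w)) with hA
    set B : ℝ := (-(l:ℝ) * x^(l-1) * w) * (-(m:ℝ) * x^(m-1))
        - (-(m:ℝ) * x^(m-1) * w) * (-(l:ℝ) * x^(l-1)) with hB
    have step : ∀ k : Fin (n+1),
        (Ehat n j l u k * pderiv' (fun v => -(m:ℝ) * v j' ^ (m-1) * v (Fin.last n)) k u
          - Ehat n j m u k * pderiv' (fun v => -(l:ℝ) * v j' ^ (l-1) * v (Fin.last n)) k u)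
        = (if j' = k then A else 0) + (if Fin.last n = k then B else 0) := by
      intro k
      rw [pd_mul m j' k u hju, pd_mul l j' k u hju]
      rcases eq_or_ne j' k with h1 | h1
      · subst h1
        have h2 : Fin.last n ≠ j' := fun hc => hjl hc.symm
        have hA1 : Ehat n j l u j' = x^l := by simp [Ehat, hj, hx]
        have hA2 : Ehat n j m u j' = x^m := by simp [Ehat, hj, hx]
        simp only [hA1, hA2, eq_self_iff_true, if_true, if_neg h2, hA]
        ring
      · rcases eq_or_ne (Fin.last n) k with h2 | h2
        · subst h2
          have hlast : ¬ ((Fin.last n : ℕ) < n) := by simp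
          have e3 : Ehat n j l u (Fin.last n) = -(l:ℝ) * x^(l-1) * w := by
            simp [Ehat, hlast, hx, hw, hj']
          have e4 : Ehat n j m u (Fin.last n) = -(m:ℝ) * x^(m-1) * w := by
            simp [Ehat, hlast, hx, hw, hj']
          simp only [e3, e4, eq_self_iff_true, if_true, if_neg h1, hB]
          ring
        · simp only [if_neg h1, if_neg h2]
          ring
    rw [Finset.sum_congr rfl (fun k _ => step k), Finset.sum_add_distrib,
      Finset.sum_ite_eq, Finset.sum_ite_eq]
    simp only [Finset.mem_univ, if_pos]
    have hlast : ¬ ((Fin.last n : ℕ) < n) := by simp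
    have eR : Ehat n j (l+m-1) u (Fin.last n)
        = -((l+m-1 : ℤ):ℝ) * x^(l+m-1-1) * w := by
      simp [Ehat, hlast, hx, hw, hj']
    rw [eR, hA, hB]
    have z1 : x^l * x^(m-2) = x^(l+m-2) := by rw [← zpow_add₀ hju]; ring_nf
    have z2 : x^m * x^(l-2) = x^(l+m-2) := by rw [← zpow_add₀ hju]; ring_nf
    have z3 : x^(l-1) * x^(m-1) = x^(l+m-2) := by rw [← zpow_add₀ hju]; ring_nf
    rw [show l+m-1-1 = l+m-2 from by ring]
    push_cast
    linear_combination (-(m:ℝ)*((m:ℝ)-1)*w) * z1 + ((l:ℝ)*((l:ℝ)-1)*w) * z2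
      + ((l:ℝ)*(m:ℝ)*w - (l:ℝ)*(m:ℝ)*w) * z3

open Polynomial in
lemma exists_y (l m : ℤ) (hlm : l < m) (hl : l ≠ 1) (hm : m ≠ 1) :
    ∃ y : ℝ, 1 < y ∧ y < 2 ∧
      ((1:ℝ)-l) * y^l + ((m:ℝ)-1) * y^m - ((m:ℝ)-l) * y^(l+m-1) ≠ 0 := by
  set N : ℤ := min l (l+m-1) with hN
  have hNl : N ≤ l := min_le_left _ _
  have hNs : N ≤ l+m-1 := min_le_right _ _
  have hNm : N ≤ m := by omega
  set a : ℕ := (l - N).toNat with ha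
  set b : ℕ := (m - N).toNat with hb
  set c : ℕ := (l + m - 1 - N).toNat with hc
  have hal : (a:ℤ) = l - N := Int.toNat_of_nonneg (by omega)
  have hbm : (b:ℤ) = m - N := Int.toNat_of_nonneg (by omega)
  have hcs : (c:ℤ) = l + m - 1 - N := Int.toNat_of_nonneg (by omega)
  set P : ℝ[X] := C ((1:ℝ)-l) * X^a + C ((m:ℝ)-1) * X^b - C ((m:ℝ)-l) * X^c with hP
  have hab : a ≠ b := by omega
  have hbc : b ≠ c := by omega
  have hP0 : P ≠ 0 := by
    intro h0
    have hco := congrArg (fun q => Polynomial.coeff q b) h0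
    simp only [hP, Polynomial.coeff_add, Polynomial.coeff_sub, Polynomial.coeff_C_mul,
      Polynomial.coeff_X_pow, Polynomial.coeff_zero] at hco
    simp only [if_true, if_neg hbc, if_neg (Ne.symm hab), mul_zero, mul_one, zero_add, sub_zero] at hco
    have : (m:ℝ) = 1 := by linarith [hco]
    exact hm (by exact_mod_cast this)
  have hfin := Polynomial.finite_setOf_isRoot hP0
  have hinf : (Set.Ioo (1:ℝ) 2).Infinite := Set.Ioo_infinite (by norm_num)
  obtain ⟨y, hy, hynr⟩ := (hinf.diff hfin).nonempty
  obtain ⟨hy1, hy2⟩ := hy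
  refine ⟨y, hy1, hy2, ?_⟩
  have hy0 : y ≠ 0 := by linarith
  have hev : P.eval y ≠ 0 := hynr
  intro hcon
  apply hev
  have key : ∀ e : ℤ, N ≤ e → y ^ e = y ^ N * y ^ (e - N).toNat := by
    intro e he
    rw [← zpow_natCast, Int.toNat_of_nonneg (by omega), ← zpow_add₀ hy0]
    ring_nf
  rw [key l hNl, key m hNm, key (l+m-1) hNs] at hcon
  have hyN : y ^ N ≠ 0 := zpow_ne_zero _ hy0
  have : y ^ N * (((1:ℝ)-l) * y^a + ((m:ℝ)-1) * y^b - ((m:ℝ)-l) * y^c) = 0 := by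
    rw [← hcon]; ring
  have h2 := (mul_eq_zero.mp this).resolve_left hyN
  simp [hP, Polynomial.eval_add, Polynomial.eval_mul]
  linarith [h2]

theorem stmt3 (n : ℕ) (hn : 2 ≤ n) (j : Fin n) (i₁ i₂ : ℤ) (h12 : i₁ < i₂) :
    (∀ u : Fin (n+1) → ℝ, OmegaSet n u →
      ∃ a b : ℝ, lieB (Ehat n j i₁) (Ehat n j i₂) u
        = fun i => a * Ehat n j i₁ u i + b * Ehat n j i₂ u i)
      ↔ (i₁ = 1 ∨ i₂ = 1) := by
  constructor
  · intro H
    by_contra hcon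
    push_neg at hcon
    obtain ⟨h1, h2⟩ := hcon
    obtain ⟨y, hy1, hy2, hy⟩ := exists_y i₁ i₂ h12 h1 h2
    -- pick k ≠ j
    haveI : Nontrivial (Fin n) := Fin.nontrivial_iff_two_le.mpr hn
    obtain ⟨k, hkj⟩ := exists_ne j
    set u : Fin (n+1) → ℝ := fun i =>
      if i = Fin.castSucc j then 1 else if i = Fin.castSucc k then y
      else if i = Fin.last n then 1 else ((i:ℕ):ℝ)+2 with hu
    have hckj : Fin.castSucc k ≠ Fin.castSucc j := by
      simp [Fin.castSucc_inj, hkj]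
    have hlj : Fin.last n ≠ Fin.castSucc j := by
      intro h; have := congrArg Fin.val h; simp at this; omega
    have hlk : Fin.last n ≠ Fin.castSucc k := by
      intro h; have := congrArg Fin.val h; simp at this; omega
    have huj : u (Fin.castSucc j) = 1 := by simp [hu]
    have huk : u (Fin.castSucc k) = y := by simp [hu, hckj]
    have hul : u (Fin.last n) = 1 := by simp [hu, hlj, hlk]
    have hval : ∀ a : Fin n, a ≠ j → a ≠ k → u (Fin.castSucc a) = ((a:ℕ):ℝ)+2 := by
      intro a haj hak
      have h1' : Fin.castSucc a ≠ Fin.castSucc j := by simp [Fin.castSucc_inj, haj]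
      have h2' : Fin.castSucc a ≠ Fin.castSucc k := by simp [Fin.castSucc_inj, hak]
      have h3' : Fin.castSucc a ≠ Fin.last n := Fin.castSucc_lt_last a |>.ne
      simp [hu, h1', h2', h3']
    have hOm : OmegaSet n u := by
      refine ⟨?_, ?_, ?_⟩
      · intro a b hab
        have key : ∀ c : Fin n, u (Fin.castSucc c)
            = if c = j then 1 else if c = k then y else ((c:ℕ):ℝ)+2 := by
          intro c
          by_cases hcj : c = j
          · rw [if_pos hcj, hcj, huj]
          · rw [if_neg hcj]
            by_cases hck : c = k
            · rw [if_pos hck, hck, huk]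
            · rw [if_neg hck, hval c hcj hck]
        rw [key a, key b]
        have hb2 : (0:ℝ) ≤ ((b:ℕ):ℝ) := by positivity
        have ha2 : (0:ℝ) ≤ ((a:ℕ):ℝ) := by positivity
        split_ifs with q1 q2 q3 q4 q5 q6 q7 q8
        all_goals first
          | (exact absurd (q1.trans q3.symm) hab)
          | (exact absurd (q1.trans q2.symm) hab)
          | (exact absurd (q4.trans q6.symm) hab)
          | (intro hh; linarith)
          | (intro hh
             have h9 : ((a:ℕ):ℝ) = ((b:ℕ):ℝ) := by linarith
             have h9' : (a:ℕ) = (b:ℕ) := by exact_mod_cast h9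
             exact hab (Fin.ext h9'))

      · intro a
        rcases eq_or_ne a j with rfl | haj
        · rw [huj]; norm_num
        · rcases eq_or_ne a k with rfl | hak
          · rw [huk]; linarith
          · rw [hval a haj hak]
            have : (0:ℝ) ≤ ((a:ℕ):ℝ) := by positivity
            linarith
      · rw [hul]; norm_num
    have hnz : ∀ a : Fin (n+1), (a:ℕ) < n → u a ≠ 0 := by
      intro a ha
      have : a = Fin.castSucc ⟨(a:ℕ), ha⟩ := Fin.ext rfl
      rw [this]
      exact hOm.2.1 _
    obtain ⟨a, b, hab⟩ := H u hOm
    rw [bracket_eq n j i₁ i₂ u hnz] at hab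
    have hj' : ((Fin.castSucc j : Fin (n+1)) : ℕ) < n := j.isLt
    have hk' : ((Fin.castSucc k : Fin (n+1)) : ℕ) < n := k.isLt
    have hlastnot : ¬ ((Fin.last n : ℕ) < n) := by simp
    have E1 := congrFun hab (Fin.castSucc j)
    have E2 := congrFun hab (Fin.castSucc k)
    have E3 := congrFun hab (Fin.last n)
    simp only [Ehat, dif_pos hj', dif_pos hk', dif_neg hlastnot, huj, huk, hul] at E1 E2 E3
    rw [one_zpow, one_zpow, one_zpow] at E1
    rw [one_zpow, one_zpow, one_zpow] at E3
    push_cast at E1 E2 E3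
    have hml : ((i₂:ℝ) - i₁) ≠ 0 := by
      have : (i₁:ℝ) < i₂ := by exact_mod_cast h12
      linarith
    have hbv : b * ((i₂:ℝ) - i₁) = ((i₂:ℝ)-1) * ((i₂:ℝ) - i₁) := by
      linear_combination (i₁:ℝ) * E1 + E3
    have hb : b = (i₂:ℝ)-1 := mul_right_cancel₀ hml hbv
    have hav : a * ((i₂:ℝ) - i₁) = (1-(i₁:ℝ)) * ((i₂:ℝ) - i₁) := by
      linear_combination (-(i₂:ℝ)) * E1 - E3
    have ha : a = 1-(i₁:ℝ) := mul_right_cancel₀ hml hav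
    apply hy
    rw [ha, hb] at E2
    linear_combination -E2
  · rintro (rfl | rfl)
    · intro u hOm
      have hnz : ∀ a : Fin (n+1), (a:ℕ) < n → u a ≠ 0 := by
        intro a ha
        have : a = Fin.castSucc ⟨(a:ℕ), ha⟩ := Fin.ext rfl
        rw [this]; exact hOm.2.1 _
      refine ⟨0, ((i₂ - 1 : ℤ):ℝ), ?_⟩
      rw [bracket_eq n j 1 i₂ u hnz]
      funext i
      rw [show (1:ℤ) + i₂ - 1 = i₂ from by ring]
      push_cast
      ring
    · intro u hOm
      have hnz : ∀ a : Fin (n+1), (a:ℕ) < n → u a ≠ 0 := by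
        intro a ha
        have : a = Fin.castSucc ⟨(a:ℕ), ha⟩ := Fin.ext rfl
        rw [this]; exact hOm.2.1 _
      refine ⟨((1 - i₁ : ℤ):ℝ), 0, ?_⟩
      rw [bracket_eq n j i₁ 1 u hnz]
      funext i
      rw [show i₁ + 1 - 1 = i₁ from by ring]
      push_cast
      ring
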